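/- Small object argument: if M is a set of morphisms with finitely presentable domains and codomains in a cocomplete locally small category, then the injectivity class M^⋔ is a weakly reflective subcategory; if moreover M is strong, M^⋔ = M^⊥ is a reflective subcategory. -/

import Mathlib

open CategoryTheory Limits

universe v u

variable {C : Type u} [Category.{v} C]

/-- `X` is injective to `f` if every map from the domain of `f` to `X` extends along `f`. -/
def Inj {A B : C} (f : A ⟶ B) (X : C) : Prop :=
  ∀ a : A ⟶ X, ∃ b : B ⟶ X, f ≫ b = a

/-- `X` is orthogonal to `f` if every map from the domain of `f` to `X` extends uniquely. -/
def Orth {A B : C} (f : A ⟶ B) (X : C) : Prop :=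
  ∀ a : A ⟶ X, ∃! b : B ⟶ X, f ≫ b = a

/-- `X` is injective to every morphism of the class `M`. -/
def MInj (M : MorphismProperty C) (X : C) : Prop :=
  ∀ ⦃A B : C⦄ (f : A ⟶ B), M f → Inj f X

/-- `X` is orthogonal to every morphism of the class `M`. -/
def MOrth (M : MorphismProperty C) (X : C) : Prop :=
  ∀ ⦃A B : C⦄ (f : A ⟶ B), M f → Orth f X

/-- A class of morphisms is strong if its injectivity class coincides with its
orthogonality class. -/
def Strong (M : MorphismProperty C) : Prop := ∀ X : C, MInj M X ↔ MOrth M X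

/-- `η : X ⟶ X'` is a weak reflection of `X` into the full subcategory of objects
satisfying `P` if `X'` satisfies `P` and every map from `X` to an object satisfying `P`
factors through `η`. -/
def IsWeakReflection (P : C → Prop) {X X' : C} (η : X ⟶ X') : Prop :=
  P X' ∧ ∀ ⦃Y : C⦄, P Y → ∀ g : X ⟶ Y, ∃ h : X' ⟶ Y, η ≫ h = g

/-- `η : X ⟶ X'` is a reflection if moreover the factorizations are unique. -/
def IsReflection (P : C → Prop) {X X' : C} (η : X ⟶ X') : Prop :=
  P X' ∧ ∀ ⦃Y : C⦄, P Y → ∀ g : X ⟶ Y, ∃! h : X' ⟶ Y, η ≫ h = g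

/-- An object is finitely presentable if its covariant hom-functor preserves filtered
colimits. -/
def FinPres (A : C) : Prop :=
  PreservesFilteredColimits (coyoneda.obj (Opposite.op A))

namespace SOA8

variable [HasColimits C] {ι : Type v} (A B : ι → C) (f : ∀ i, A i ⟶ B i) (X : C)

noncomputable def stepObj : C :=
  pushout (Limits.Sigma.desc (fun s : Σ i, (A i ⟶ X) => s.2))
          (Limits.Sigma.map (fun s : Σ i, (A i ⟶ X) => f s.1))

noncomputable def stepHom : X ⟶ stepObj A B f X := pushout.inl _ _

noncomputable def stepB (s : Σ i, (A i ⟶ X)) : B s.1 ⟶ stepObj A B f X :=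
  Limits.Sigma.ι (fun s : Σ i, (A i ⟶ X) => B s.1) s ≫ pushout.inr _ _

lemma stepB_fac (s : Σ i, (A i ⟶ X)) :
    f s.1 ≫ stepB A B f X s = s.2 ≫ stepHom A B f X := by
  have h := pushout.condition (f := Limits.Sigma.desc (fun s : Σ i, (A i ⟶ X) => s.2))
    (g := Limits.Sigma.map (fun s : Σ i, (A i ⟶ X) => f s.1))
  have e1 : f s.1 ≫ stepB A B f X s
      = (Limits.Sigma.ι (fun s : Σ i, (A i ⟶ X) => A s.1) s ≫
          Limits.Sigma.map (fun s : Σ i, (A i ⟶ X) => f s.1)) ≫ pushout.inr _ _ := by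
        simp [stepB]
        rfl
  have e2 : (Limits.Sigma.ι (fun s : Σ i, (A i ⟶ X) => A s.1) s ≫
          Limits.Sigma.map (fun s : Σ i, (A i ⟶ X) => f s.1)) ≫ pushout.inr (Limits.Sigma.desc (fun s : Σ i, (A i ⟶ X) => s.2)) (Limits.Sigma.map (fun s : Σ i, (A i ⟶ X) => f s.1))
      = Limits.Sigma.ι (fun s : Σ i, (A i ⟶ X) => A s.1) s ≫
          Limits.Sigma.desc (fun s : Σ i, (A i ⟶ X) => s.2) ≫ pushout.inl (Limits.Sigma.desc (fun s : Σ i, (A i ⟶ X) => s.2)) (Limits.Sigma.map (fun s : Σ i, (A i ⟶ X) => f s.1)) := by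
        rw [Category.assoc, ← h]
  have e3 : Limits.Sigma.ι (fun s : Σ i, (A i ⟶ X) => A s.1) s ≫
          Limits.Sigma.desc (fun s : Σ i, (A i ⟶ X) => s.2) ≫ pushout.inl (Limits.Sigma.desc (fun s : Σ i, (A i ⟶ X) => s.2)) (Limits.Sigma.map (fun s : Σ i, (A i ⟶ X) => f s.1))
      = s.2 ≫ stepHom A B f X := by
        simp [stepHom]
        rfl
  exact e1.trans (e2.trans e3)

noncomputable def stepDesc {Y : C} (h : X ⟶ Y) (e : ∀ s : Σ i, (A i ⟶ X), B s.1 ⟶ Y)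
    (w : ∀ s, f s.1 ≫ e s = s.2 ≫ h) : stepObj A B f X ⟶ Y :=
  pushout.desc h (Limits.Sigma.desc e) (by ext s; simp [w s])

@[simp] lemma stepHom_stepDesc {Y : C} (h : X ⟶ Y) (e : ∀ s : Σ i, (A i ⟶ X), B s.1 ⟶ Y)
    (w : ∀ s, f s.1 ≫ e s = s.2 ≫ h) : stepHom A B f X ≫ stepDesc A B f X h e w = h := by
  simp [stepHom, stepDesc]
  exact pushout.inl_desc _ _ _

lemma step_hom_ext {Y : C} {u v : stepObj A B f X ⟶ Y}
    (h1 : stepHom A B f X ≫ u = stepHom A B f X ≫ v)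
    (h2 : ∀ s, stepB A B f X s ≫ u = stepB A B f X s ≫ v) : u = v := by
  apply pushout.hom_ext
  · exact h1
  · apply Limits.Sigma.hom_ext
    intro s
    have := h2 s
    exact (Category.assoc _ _ _).symm.trans (this.trans (Category.assoc _ _ _))

noncomputable def chainObj : ℕ → C
  | 0 => X
  | n + 1 => stepObj A B f (chainObj n)

noncomputable def chainMap (n : ℕ) : chainObj A B f X n ⟶ chainObj A B f X (n + 1) :=
  stepHom A B f (chainObj A B f X n)

noncomputable def chain : ℕ ⥤ C := Functor.ofSequence (chainMap A B f X)

noncomputable def rObj : C := colimit (chain A B f X)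

noncomputable def rUnit : X ⟶ rObj A B f X := colimit.ι (chain A B f X) 0

lemma chain_w (n : ℕ) :
    stepHom A B f (chainObj A B f X n) ≫ colimit.ι (chain A B f X) (n + 1) =
      colimit.ι (chain A B f X) n := by
  show chainMap A B f X n ≫ _ = _
  rw [← Functor.ofSequence_map_homOfLE_succ (chainMap A B f X) n]
  exact colimit.w _ _

lemma rObj_inj (hA : ∀ i, FinPres (A i)) (i : ι) : Inj (f i) (rObj A B f X) := by
  intro a
  letI : PreservesFilteredColimits (coyoneda.obj (Opposite.op (A i))) := hA i
  haveI : IsFiltered (AsSmall.{v} ℕ) := IsFiltered.of_equivalence AsSmall.equiv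
  have hcc : IsColimit ((colimit.cocone (chain A B f X)).whisker AsSmall.equiv.symm.functor) :=
    (colimit.isColimit (chain A B f X)).whiskerEquivalence AsSmall.equiv.symm
  have hc := isColimitOfPreserves (coyoneda.obj (Opposite.op (A i))) hcc
  obtain ⟨m, a', ha'⟩ := Types.jointly_surjective _ hc a
  have ha'' : a' ≫ colimit.ι (chain A B f X) (ULift.down m) = a := ha'
  refine ⟨stepB A B f (chainObj A B f X (ULift.down m)) ⟨i, a'⟩ ≫
    colimit.ι (chain A B f X) ((ULift.down m) + 1), ?_⟩
  have hf := stepB_fac A B f (chainObj A B f X (ULift.down m)) ⟨i, a'⟩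
  dsimp only at hf
  exact (Category.assoc _ _ _).symm.trans ((hf =≫ _).trans ((Category.assoc _ _ _).trans
    ((a' ≫= chain_w A B f X _).trans ha'')))

noncomputable def extChain {Y : C} (hY : ∀ i, Inj (f i) Y) (g : X ⟶ Y) :
    ∀ n, (chainObj A B f X n ⟶ Y)
  | 0 => g
  | n + 1 => stepDesc A B f (chainObj A B f X n) (extChain hY g n)
      (fun s => Classical.choose (hY s.1 (s.2 ≫ extChain hY g n)))
      (fun s => Classical.choose_spec (hY s.1 (s.2 ≫ extChain hY g n)))

lemma extChain_w {Y : C} (hY : ∀ i, Inj (f i) Y) (g : X ⟶ Y) (n : ℕ) :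
    chainMap A B f X n ≫ extChain A B f X hY g (n + 1) = extChain A B f X hY g n := by
  simp [extChain, chainMap]
  exact stepHom_stepDesc A B f _ _ _ _

lemma rObj_wr {Y : C} (hY : ∀ i, Inj (f i) Y) (g : X ⟶ Y) :
    ∃ h : rObj A B f X ⟶ Y, rUnit A B f X ≫ h = g := by
  refine ⟨colimit.desc (chain A B f X)
    ⟨Y, NatTrans.ofSequence (F := chain A B f X) (G := (Functor.const ℕ).obj Y)
      (fun n => extChain A B f X hY g n) (fun n => ?_)⟩, ?_⟩
  · have hm : (chain A B f X).map (homOfLE (n.le_add_right 1)) = chainMap A B f X n :=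
      Functor.ofSequence_map_homOfLE_succ (chainMap A B f X) n
    rw [hm]
    simp
    exact (extChain_w A B f X hY g n).trans (Category.comp_id _).symm
  · exact colimit.ι_desc _ 0

lemma rUnit_unique {Y : C} (hY : ∀ i, Orth (f i) Y) (h h' : rObj A B f X ⟶ Y)
    (e : rUnit A B f X ≫ h = rUnit A B f X ≫ h') : h = h' := by
  apply colimit.hom_ext
  intro n
  induction n with
  | zero => exact e
  | succ n ih =>
    have hstep := chain_w A B f X n
    apply step_hom_ext
    · exact (Category.assoc _ _ _).symm.trans ((hstep =≫ h).trans
        (ih.trans ((hstep =≫ h').symm.trans (Category.assoc _ _ _))))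
    · intro s
      have key : ∀ u : rObj A B f X ⟶ Y,
          colimit.ι (chain A B f X) n ≫ u = colimit.ι (chain A B f X) n ≫ h →
          f s.1 ≫ stepB A B f (chainObj A B f X n) s ≫ colimit.ι (chain A B f X) (n + 1) ≫ u
            = s.2 ≫ colimit.ι (chain A B f X) n ≫ h := by
        intro u hu
        rw [← Category.assoc, stepB_fac, Category.assoc]
        exact s.2 ≫= ((Category.assoc _ _ _).symm.trans ((hstep =≫ u).trans hu))
      exact (hY s.1 (s.2 ≫ colimit.ι (chain A B f X) n ≫ h)).unique (key h rfl) (key h' ih.symm)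

end SOA8

/-- The small object argument: for a set of morphisms `f i : A i ⟶ B i` with finitely
presentable domains and codomains in a cocomplete locally small category, every object
admits a weak reflection into the injectivity class; if the set is strong, every object
admits a reflection into the (then coinciding) orthogonality class. -/
theorem stmt_8 [HasColimits C] {ι : Type v} (A B : ι → C) (f : ∀ i, A i ⟶ B i)
    (hA : ∀ i, FinPres (A i)) (hB : ∀ i, FinPres (B i)) :
    (∀ X : C, ∃ (X' : C) (η : X ⟶ X'),
        IsWeakReflection (fun Y => ∀ i, Inj (f i) Y) η) ∧
    ((∀ X : C, (∀ i, Inj (f i) X) ↔ (∀ i, Orth (f i) X)) →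
      ∀ X : C, ∃ (X' : C) (η : X ⟶ X'),
        IsReflection (fun Y => ∀ i, Orth (f i) Y) η) := by
  constructor
  · intro X
    exact ⟨SOA8.rObj A B f X, SOA8.rUnit A B f X,
      fun i => SOA8.rObj_inj A B f X hA i,
      fun Y hY g => SOA8.rObj_wr A B f X hY g⟩
  · intro hS X
    refine ⟨SOA8.rObj A B f X, SOA8.rUnit A B f X,
      (hS _).1 (fun i => SOA8.rObj_inj A B f X hA i), ?_⟩
    intro Y hY g
    obtain ⟨h, hh⟩ := SOA8.rObj_wr A B f X (fun i => (hS Y).2 hY i) g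
    exact ⟨h, hh, fun h' hh' =>
      SOA8.rUnit_unique A B f X hY h' h (hh'.trans hh.symm)⟩
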